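/- Let X = Spec(A) be an affine scheme with finitely many minimal primes. Then X satisfies (S₁') (every dense open is schematically dense) if and only if every zerodivisor of A belongs to at least one minimal prime of A. -/

import Mathlib

section
variable {A : Type*} [CommRing A]

/-- A dense open in `Spec A` contains every minimal prime (finiteness of the set of
minimal primes is used). -/
lemma aux_min_mem_dense (hfin : (minimalPrimes A).Finite) {U : Set (PrimeSpectrum A)}
    (hU : IsOpen U) (hD : Dense U) {q : Ideal A} (hq : q ∈ minimalPrimes A) :
    (⟨q, hq.1.1⟩ : PrimeSpectrum A) ∈ U := by
  classical
  set Q : PrimeSpectrum A := ⟨q, hq.1.1⟩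
  -- consider the open set of points containing no other minimal prime
  set W : Set (PrimeSpectrum A) :=
    (⋃ r ∈ (minimalPrimes A) \ {q}, PrimeSpectrum.zeroLocus (r : Set A))ᶜ with hW
  have hWopen : IsOpen W := by
    have : IsClosed (⋃ r ∈ (minimalPrimes A) \ {q}, PrimeSpectrum.zeroLocus (r : Set A)) :=
      (hfin.subset Set.diff_subset).isClosed_biUnion
        (fun r _ => PrimeSpectrum.isClosed_zeroLocus _)
    exact this.isOpen_compl
  have hQW : Q ∈ W := by
    simp only [hW, Set.mem_compl_iff, Set.mem_iUnion, not_exists]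
    rintro r ⟨hr, hrq⟩ hQr
    -- q would contain r, contradicting minimality / incomparability
    have hle : r ≤ q := (PrimeSpectrum.mem_zeroLocus _ _).mp hQr
    exact hrq (le_antisymm hle (hq.2 ⟨hr.1.1, bot_le⟩ hle))
  obtain ⟨x, hxW, hxU⟩ := dense_iff_inter_open.mp hD W hWopen ⟨Q, hQW⟩
  -- x contains some minimal prime, which must be q
  obtain ⟨r, hr, hrx⟩ := Ideal.exists_minimalPrimes_le (I := ⊥) (J := x.asIdeal) bot_le
  have hrq : r = q := by
    by_contra hne
    have : x ∈ ⋃ r ∈ (minimalPrimes A) \ {q}, PrimeSpectrum.zeroLocus (r : Set A) := by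
      refine Set.mem_biUnion ⟨hr, hne⟩ ?_
      exact (PrimeSpectrum.mem_zeroLocus _ _).mpr hrx
    exact hxW this
  subst hrq
  have hspec : Q ⤳ x := (PrimeSpectrum.le_iff_specializes Q x).mp hrx
  exact hspec.mem_open hU hxU

end

/-- Let `X = Spec A` be an affine scheme with finitely many minimal primes. Then `X`
satisfies (S₁') (every element vanishing on a dense open vanishes, i.e. every dense open
is schematically dense) if and only if every zerodivisor of `A` belongs to at least one
minimal prime of `A`. -/
theorem stmt_15 {A : Type*} [CommRing A] (hfin : (minimalPrimes A).Finite) :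
    (∀ U : Set (PrimeSpectrum A), IsOpen U → Dense U →
        ∀ a : A, (∀ p ∈ U, algebraMap A (Localization.AtPrime p.asIdeal) a = 0) → a = 0) ↔
      ∀ a : A, (∃ b : A, b ≠ 0 ∧ a * b = 0) → ∃ p ∈ minimalPrimes A, a ∈ p := by
  classical
  constructor
  · rintro H a ⟨b, hb, hab⟩
    by_contra hno
    push_neg at hno
    set U : Set (PrimeSpectrum A) := {x | a ∉ x.asIdeal} with hUdef
    have hUopen : IsOpen U := by
      have : U = ↑(PrimeSpectrum.basicOpen a) := by
        ext x; simp [hUdef, PrimeSpectrum.basicOpen]; exact Iff.rfl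
      rw [this]; exact (PrimeSpectrum.basicOpen a).2
    have hUdense : Dense U := by
      rw [dense_iff_inter_open]
      intro W hW ⟨x, hx⟩
      obtain ⟨r, hr, hrx⟩ := Ideal.exists_minimalPrimes_le (I := ⊥) (J := x.asIdeal) bot_le
      refine ⟨⟨r, hr.1.1⟩, ?_, ?_⟩
      · exact ((PrimeSpectrum.le_iff_specializes _ x).mp hrx).mem_open hW hx
      · exact hno r hr
    have hb0 : b = 0 := by
      refine H U hUopen hUdense b ?_
      intro p hp
      refine (IsLocalization.map_eq_zero_iff p.asIdeal.primeCompl _ b).mpr ⟨⟨a, hp⟩, hab⟩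
    exact hb hb0
  · intro H U hUopen hUdense a ha
    by_contra h0
    set I : Ideal A :=
      { carrier := {s | s * a = 0}
        add_mem' := fun {x y} hx hy => by simp only [Set.mem_setOf_eq] at *
                                          rw [add_mul, hx, hy, add_zero]
        zero_mem' := by simp
        smul_mem' := fun c x hx => by
          simp only [Set.mem_setOf_eq, smul_eq_mul] at *
          rw [mul_assoc, hx, mul_zero] } with hIdef
    have hsub : (I : Set A) ⊆ ⋃ p ∈ (hfin.toFinset : Set (Ideal A)), ((id p : Ideal A) : Set A) := by
      intro s hs
      obtain ⟨p, hp, hsp⟩ := H s ⟨a, h0, hs⟩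
      exact Set.mem_biUnion (by simpa using hp) hsp
    have hprime : ∀ i ∈ hfin.toFinset, i ≠ (⊥ : Ideal A) → i ≠ (⊥ : Ideal A) →
        (id i : Ideal A).IsPrime := by
      intro i hi _ _
      exact (hfin.mem_toFinset.mp hi).1.1
    obtain ⟨q, hq, hIq⟩ := (Ideal.subset_union_prime (⊥ : Ideal A) (⊥ : Ideal A) hprime).mp hsub
    rw [hfin.mem_toFinset] at hq
    have hqU : (⟨q, hq.1.1⟩ : PrimeSpectrum A) ∈ U := aux_min_mem_dense hfin hUopen hUdense hq
    haveI := hq.1.1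
    have := ha _ hqU
    obtain ⟨⟨m, hm⟩, hma⟩ := (IsLocalization.map_eq_zero_iff (Ideal.primeCompl q) _ a).mp this
    exact hm (hIq hma)
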